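/- A spatially balanced Latin square (one with imbalance I(L) = 0) of order n can exist only if 3 divides n(n+1); in particular, if n ≡ 1 (mod 3) then I(L) > 0 for every n × n Latin square L. -/
import Mathlib


open Finset

structure LatinSquare (n : ℕ) where
  toFun : Fin n → Fin n → Fin n
  row_bij : ∀ r, Function.Bijective (toFun r)
  col_bij : ∀ c, Function.Bijective (fun r => toFun r c)

namespace LatinSquare

variable {n : ℕ}

/-- The column containing symbol `s` in row `r`. -/
noncomputable def pos (L : LatinSquare n) (r s : Fin n) : Fin n :=
  (Equiv.ofBijective _ (L.row_bij r)).symm s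

/-- The distance between two rows. -/
noncomputable def dist (L : LatinSquare n) (r₁ r₂ : Fin n) : ℤ :=
  ∑ s : Fin n, |((L.pos r₁ s : ℕ) : ℤ) - ((L.pos r₂ s : ℕ) : ℤ)|

/-- Three times the imbalance, `3·I(L)`. -/
noncomputable def imbalance3 (L : LatinSquare n) : ℤ :=
  ∑ p ∈ Finset.univ.filter (fun p : Fin n × Fin n => p.1 < p.2),
    |3 * L.dist p.1 p.2 - (n : ℤ) * ((n : ℤ) + 1)|

end LatinSquare

theorem LatinSquare.sbls_necessary (n : ℕ) (hn : 2 ≤ n) :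
    (∀ L : LatinSquare n, L.imbalance3 = 0 → (3 : ℤ) ∣ (n : ℤ) * ((n : ℤ) + 1)) ∧
      (n % 3 = 1 → ∀ L : LatinSquare n, 0 < L.imbalance3) := by
  have h01 : ((⟨0, by omega⟩ : Fin n), (⟨1, by omega⟩ : Fin n)) ∈
      Finset.univ.filter (fun p : Fin n × Fin n => p.1 < p.2) := by
    simp only [Finset.mem_filter, Finset.mem_univ, true_and, Fin.mk_lt_mk]
    omega
  constructor
  · intro L hL
    have hterm := (Finset.sum_eq_zero_iff_of_nonneg
      (fun p _ => abs_nonneg _)).mp hL _ h01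
    have h0 := abs_eq_zero.mp hterm
    exact ⟨L.dist _ _, by linarith⟩
  · intro h3 L
    obtain ⟨k, hk⟩ : ∃ k, n = 3 * k + 1 := ⟨n / 3, by omega⟩
    have hndvd : ¬ (3 : ℤ) ∣ (n : ℤ) * ((n : ℤ) + 1) := by
      have hexp : (n : ℤ) * ((n : ℤ) + 1) = 3 * (3 * (k : ℤ) ^ 2 + 3 * k) + 2 := by
        subst hk; push_cast; ring
      rw [hexp]
      generalize (3 * (k : ℤ) ^ 2 + 3 * (k : ℤ)) = c
      omega
    refine Finset.sum_pos' (fun p _ => abs_nonneg _)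
      ⟨_, h01, abs_pos.mpr ?_⟩
    intro heq
    exact hndvd ⟨L.dist _ _, by linarith⟩
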